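/- arXiv:1908.00832 — 2 statements merged into one kernel-verified Lean document; each statement's English description precedes it below -/
import Mathlib

section
/- Let A = {z ∈ ℂ : r < |z - x| < R} be an annulus with 0 < r < R ≤ ∞, and let γ₀ : [0,1] → A be a simple continuous curve connecting the outer and inner boundaries of A. Then for any simple continuous curve γ contained in A \ γ₀, the topological winding of γ around x satisfies |W(γ, x)| ≤ sup_{0 ≤ s₁ < s₂ ≤ 1} |W(γ₀[s₁,s₂], x)| + 4π. -/
open Complex Set Metric Filter

private lemma wia_prod_telescope (U : ℕ → ℂ) :
    ∀ n : ℕ, (∀ j, j ≤ n → U j ≠ 0) →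
      (∏ j ∈ Finset.range n, U (j+1) / U j) = U n / U 0 := by
  intro n
  induction n with
  | zero => intro h; simp [div_self (h 0 le_rfl)]
  | succ n ih =>
    intro h
    rw [Finset.prod_range_succ, ih (fun j hj => h j (hj.trans (Nat.le_succ n)))]
    have h0 := h 0 (Nat.zero_le _)
    have hn := h n (Nat.le_succ n)
    field_simp

private lemma wia_re_div_pos {w z : ℂ} (hz : z ≠ 0) (h : dist w z < ‖z‖) :
    0 < (w / z).re := by
  have hzpos : 0 < ‖z‖ := norm_pos_iff.mpr hz
  have habs : ‖w / z - 1‖ < 1 := by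
    have : w / z - 1 = (w - z) / z := by field_simp
    rw [this, norm_div, div_lt_one hzpos]
    rwa [Complex.dist_eq] at h
  have hre : |(w / z - 1).re| ≤ ‖w / z - 1‖ := Complex.abs_re_le_norm _
  have h2 : (w / z - 1).re = (w / z).re - 1 := by simp
  rw [h2] at hre
  have := abs_le.1 hre
  linarith [this.1]

private lemma wia_slit {w z : ℂ} (hz : z ≠ 0) (h : dist w z < ‖z‖) :
    w / z ∈ Complex.slitPlane :=
  Or.inl (wia_re_div_pos hz h)

/-- branch lemma: a continuous function avoiding `c + πℤ` on an interval stays in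
one component. -/
private lemma wia_branch (g : ℝ → ℝ) (a b c : ℝ) (hab : a ≤ b)
    (hg : ContinuousOn g (Icc a b))
    (h : ∀ τ ∈ Icc a b, ∀ j : ℤ, g τ ≠ c + Real.pi * j) :
    ∃ m : ℤ, ∀ τ ∈ Icc a b, g τ ∈ Ioo (c + Real.pi * m) (c + Real.pi * (m+1)) := by
  have hπ := Real.pi_pos
  set m : ℤ := ⌊(g a - c) / Real.pi⌋ with hm
  have hamem : a ∈ Icc a b := ⟨le_rfl, hab⟩
  have h1 : c + Real.pi * m ≤ g a := by
    have h0 := Int.floor_le ((g a - c) / Real.pi)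
    rw [← hm] at h0
    have := (le_div_iff₀ hπ).1 h0
    linarith
  have h1' : c + Real.pi * m < g a :=
    lt_of_le_of_ne h1 (fun he => h a hamem m he.symm)
  have h2 : g a < c + Real.pi * (m + 1) := by
    have h0 := Int.lt_floor_add_one ((g a - c) / Real.pi)
    rw [← hm] at h0
    have := (div_lt_iff₀ hπ).1 h0
    push_cast
    linarith
  refine ⟨m, fun τ hτ => ?_⟩
  by_contra hc
  have hsub : uIcc τ a ⊆ Icc a b := uIcc_subset_Icc hτ hamem
  have hIVT := intermediate_value_uIcc (hg.mono hsub)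
  rcases not_and_or.1 hc with hlo | hhi
  · -- g τ ≤ c + π m
    push_neg at hlo
    have hmem : c + Real.pi * m ∈ uIcc (g τ) (g a) := by
      rw [Set.mem_uIcc]; left; exact ⟨hlo, le_of_lt h1'⟩
    obtain ⟨σ, hσ, hσv⟩ := hIVT hmem
    exact h σ (hsub hσ) m hσv
  · -- c + π (m+1) ≤ g τ
    push_neg at hhi
    have hmem : c + Real.pi * (m + 1) ∈ uIcc (g τ) (g a) := by
      rw [Set.mem_uIcc]; right; exact ⟨le_of_lt h2, hhi⟩
    obtain ⟨σ, hσ, hσv⟩ := hIVT hmem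
    refine h σ (hsub hσ) (m + 1) ?_
    rw [hσv]; push_cast; ring



private lemma wia_odd_of_sin_neg {x : ℝ} {m : ℤ}
    (hx : x ∈ Ioo (Real.pi * m) (Real.pi * (m+1))) (hs : Real.sin x < 0) : Odd m := by
  rcases Int.even_or_odd m with ⟨c, hc⟩ | h
  · exfalso
    have hper : Real.sin (x - c*(2*Real.pi)) = Real.sin x := Real.sin_periodic.sub_int_mul_eq c
    have hc' : (m : ℝ) = c + c := by rw [hc]; push_cast; ring
    have h1 : 0 ≤ x - c*(2*Real.pi) := by have := hx.1; rw [hc'] at this; linarith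
    have h2 : x - c*(2*Real.pi) ≤ Real.pi := by have := hx.2; rw [hc'] at this; linarith
    have := Real.sin_nonneg_of_nonneg_of_le_pi h1 h2
    rw [hper] at this; linarith
  · exact h

private lemma wia_even_of_sin_pos {x : ℝ} {m : ℤ}
    (hx : x ∈ Ioo (Real.pi * m) (Real.pi * (m+1))) (hs : 0 < Real.sin x) : Even m := by
  rcases Int.even_or_odd m with h | ⟨c, hc⟩
  · exact h
  · exfalso
    have hper : Real.sin (x - ((c+1 : ℤ) : ℝ)*(2*Real.pi)) = Real.sin x :=
      Real.sin_periodic.sub_int_mul_eq (x := x) (c+1)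
    have hc' : (m : ℝ) = 2*c + 1 := by rw [hc]; push_cast; ring
    have h1 : x - (c+1)*(2*Real.pi) ≤ 0 := by have := hx.2; rw [hc'] at this; push_cast; linarith
    have h2 : -Real.pi ≤ x - (c+1)*(2*Real.pi) := by
      have := hx.1; rw [hc'] at this; push_cast; linarith
    have := Real.sin_nonpos_of_nonpos_of_neg_pi_le h1 h2
    push_cast at hper
    rw [hper] at this; linarith

private lemma wia_even_of_cos_neg {x : ℝ} {m : ℤ}
    (hx : x ∈ Ioo (Real.pi/2 + Real.pi * m) (Real.pi/2 + Real.pi * (m+1)))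
    (hs : Real.cos x < 0) : Even m := by
  rcases Int.even_or_odd m with h | ⟨c, hc⟩
  · exact h
  · exfalso
    have hper : Real.cos (x - ((c+1 : ℤ) : ℝ)*(2*Real.pi)) = Real.cos x :=
      Real.cos_periodic.sub_int_mul_eq (x := x) (c+1)
    have hc' : (m : ℝ) = 2*c + 1 := by rw [hc]; push_cast; ring
    have h1 : x - (c+1)*(2*Real.pi) ∈ Icc (-(Real.pi/2)) (Real.pi/2) := by
      constructor
      · have := hx.1; rw [hc'] at this; push_cast; linarith
      · have := hx.2; rw [hc'] at this; push_cast; linarith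
    have := Real.cos_nonneg_of_mem_Icc h1
    push_cast at hper
    rw [hper] at this; linarith

private lemma wia_odd_of_cos_pos {x : ℝ} {m : ℤ}
    (hx : x ∈ Ioo (Real.pi/2 + Real.pi * m) (Real.pi/2 + Real.pi * (m+1)))
    (hs : 0 < Real.cos x) : Odd m := by
  rcases Int.even_or_odd m with ⟨c, hc⟩ | h
  · exfalso
    have hper : Real.cos (x - c*(2*Real.pi)) = Real.cos x := Real.cos_periodic.sub_int_mul_eq c
    have hc' : (m : ℝ) = c + c := by rw [hc]; push_cast; ring
    have h1 : Real.pi/2 ≤ x - c*(2*Real.pi) := by have := hx.1; rw [hc'] at this; linarith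
    have h2 : x - c*(2*Real.pi) ≤ Real.pi + Real.pi/2 := by
      have := hx.2; rw [hc'] at this; linarith
    have := Real.cos_nonpos_of_pi_div_two_le_of_le h1 h2
    rw [hper] at this; linarith
  · exact h



private lemma wia_exists_lift (F : ℝ × ℝ → ℂ)
    (hF : ContinuousOn F (Icc (0:ℝ) 1 ×ˢ Icc (0:ℝ) 1))
    (h0 : ∀ p ∈ (Icc (0:ℝ) 1 ×ˢ Icc (0:ℝ) 1), F p ≠ 0) :
    ∃ G : ℝ × ℝ → ℝ, ContinuousOn G (Icc (0:ℝ) 1 ×ˢ Icc (0:ℝ) 1) ∧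
      ∀ p ∈ (Icc (0:ℝ) 1 ×ˢ Icc (0:ℝ) 1),
        F p = (‖F p‖ : ℂ) * Complex.exp ((G p : ℂ) * Complex.I) := by
  set Q : Set (ℝ × ℝ) := Icc (0:ℝ) 1 ×ˢ Icc (0:ℝ) 1 with hQ
  have hQc : IsCompact Q := isCompact_Icc.prod isCompact_Icc
  have hQne : Q.Nonempty := ⟨(0,0), by
    constructor <;> exact ⟨le_rfl, zero_le_one⟩⟩
  have habs_cont : ContinuousOn (fun p => ‖F p‖) Q :=
    continuous_norm.comp_continuousOn hF
  obtain ⟨p₀, hp₀Q, hp₀min⟩ := hQc.exists_isMinOn hQne habs_cont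
  set ε := ‖F p₀‖ with hε_def
  have hε : 0 < ε := norm_pos_iff.mpr (h0 _ hp₀Q)
  have hεle : ∀ p ∈ Q, ε ≤ ‖F p‖ := fun p hp => isMinOn_iff.1 hp₀min p hp
  have huc := hQc.uniformContinuousOn_of_continuous hF
  rw [Metric.uniformContinuousOn_iff] at huc
  obtain ⟨δ, hδ, hδ2⟩ := huc ε hε
  obtain ⟨n, hn⟩ := exists_nat_one_div_lt hδ
  set N : ℕ := n + 1 with hN_def
  have hNpos : (0:ℝ) < N := by positivity
  have hND : (1:ℝ)/N < δ := by
    have : ((N:ℝ)) = (n:ℝ) + 1 := by push_cast [hN_def]; ring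
    rw [this]; exact hn
  -- the per-term helper
  have main : ∀ (q₁ q₂ : ℝ × ℝ → ℝ × ℝ), Continuous q₁ → Continuous q₂ →
      MapsTo q₁ Q Q → MapsTo q₂ Q Q → (∀ p ∈ Q, dist (q₁ p) (q₂ p) < δ) →
      ContinuousOn (fun p => Complex.arg (F (q₁ p) / F (q₂ p))) Q ∧
      ∀ p ∈ Q, Complex.exp ((Complex.arg (F (q₁ p) / F (q₂ p)) : ℂ) * Complex.I)
          = (F (q₁ p) / (‖F (q₁ p)‖ : ℂ)) / (F (q₂ p) / (‖F (q₂ p)‖ : ℂ)) := by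
    intro q₁ q₂ hq₁ hq₂ hm₁ hm₂ hdist
    have hne₂ : ∀ p ∈ Q, F (q₂ p) ≠ 0 := fun p hp => h0 _ (hm₂ hp)
    have hFd : ∀ p ∈ Q, dist (F (q₁ p)) (F (q₂ p)) < ‖F (q₂ p)‖ := fun p hp =>
      lt_of_lt_of_le (hδ2 _ (hm₁ hp) _ (hm₂ hp) (hdist p hp)) (hεle _ (hm₂ hp))
    have hcont2 : ContinuousOn (fun p => F (q₁ p) / F (q₂ p)) Q :=
      (hF.comp hq₁.continuousOn hm₁).div (hF.comp hq₂.continuousOn hm₂) hne₂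
    constructor
    · intro p hp
      exact ContinuousAt.comp_continuousWithinAt (f := fun p => F (q₁ p) / F (q₂ p))
        (g := Complex.arg) (Complex.continuousAt_arg (wia_slit (hne₂ p hp) (hFd p hp)))
        (hcont2 p hp)
    · intro p hp
      have hne₁ : F (q₁ p) ≠ 0 := h0 _ (hm₁ hp)
      have hu : F (q₁ p) / F (q₂ p) ≠ 0 := div_ne_zero hne₁ (hne₂ p hp)
      have habsne : (‖F (q₁ p) / F (q₂ p)‖ : ℂ) ≠ 0 :=
        Complex.ofReal_ne_zero.2 (norm_ne_zero_iff.mpr hu)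
      have key := Complex.norm_mul_exp_arg_mul_I (F (q₁ p) / F (q₂ p))
      have h1 : Complex.exp ((Complex.arg (F (q₁ p) / F (q₂ p)) : ℂ) * Complex.I)
          = (F (q₁ p) / F (q₂ p)) / (‖F (q₁ p) / F (q₂ p)‖ : ℂ) := by
        rw [eq_div_iff habsne, mul_comm]; exact key
      rw [h1, norm_div, Complex.ofReal_div]
      have ha₁ : (‖F (q₁ p)‖ : ℂ) ≠ 0 :=
        Complex.ofReal_ne_zero.2 (norm_ne_zero_iff.mpr hne₁)
      have ha₂ : (‖F (q₂ p)‖ : ℂ) ≠ 0 :=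
        Complex.ofReal_ne_zero.2 (norm_ne_zero_iff.mpr (hne₂ p hp))
      field_simp
  -- sample point maps
  set e1 : ℕ → ℝ × ℝ → ℝ × ℝ := fun j p => (min p.1 ((j : ℝ) / N), 0) with he1
  set e2 : ℕ → ℝ × ℝ → ℝ × ℝ := fun j p => (p.1, min p.2 ((j : ℝ) / N)) with he2
  have hmap1 : ∀ j, MapsTo (e1 j) Q Q := by
    intro j p hp
    refine ⟨⟨le_min hp.1.1 (by positivity), (min_le_left _ _).trans hp.1.2⟩,
      ⟨le_rfl, zero_le_one⟩⟩
  have hmap2 : ∀ j, MapsTo (e2 j) Q Q := by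
    intro j p hp
    exact ⟨hp.1, ⟨le_min hp.2.1 (by positivity), (min_le_left _ _).trans hp.2.2⟩⟩
  have hcont1 : ∀ j, Continuous (e1 j) := fun j =>
    (continuous_fst.min continuous_const).prodMk continuous_const
  have hcont2 : ∀ j, Continuous (e2 j) := fun j =>
    continuous_fst.prodMk (continuous_snd.min continuous_const)
  have lip : ∀ u v w : ℝ, |min u v - min u w| ≤ |v - w| := by
    intro u v w
    have h := lipschitzWith_min.dist_le_mul (u, v) (u, w)
    simp only [Prod.dist_eq, Real.dist_eq, dist_self, NNReal.coe_one, one_mul] at h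
    calc |min u v - min u w| ≤ max |u - u| |v - w| := by
          simpa [Real.dist_eq] using h
      _ = |v - w| := by simp
  have hstep : ∀ (j : ℕ), |((j+1 : ℕ) : ℝ) / N - ((j : ℕ) : ℝ) / N| < δ := by
    intro j
    have : ((j+1 : ℕ) : ℝ) / N - ((j : ℕ) : ℝ) / N = 1 / N := by
      push_cast; field_simp; ring
    rw [this, abs_of_pos (by positivity)]
    exact hND
  have hdist1 : ∀ j, ∀ p ∈ Q, dist (e1 (j+1) p) (e1 j p) < δ := by
    intro j p hp
    have hd : dist (e1 (j+1) p) (e1 j p) ≤ |((j+1 : ℕ) : ℝ)/N - ((j : ℕ) : ℝ)/N| := by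
      rw [Prod.dist_eq]
      refine max_le ?_ (by simpa [he1] using abs_nonneg _)
      rw [Real.dist_eq]
      exact lip _ _ _
    exact hd.trans_lt (hstep j)
  have hdist2 : ∀ j, ∀ p ∈ Q, dist (e2 (j+1) p) (e2 j p) < δ := by
    intro j p hp
    have hd : dist (e2 (j+1) p) (e2 j p) ≤ |((j+1 : ℕ) : ℝ)/N - ((j : ℕ) : ℝ)/N| := by
      rw [Prod.dist_eq]
      refine max_le (by simpa [he2] using abs_nonneg _) ?_
      rw [Real.dist_eq]
      exact lip _ _ _
    exact hd.trans_lt (hstep j)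
  have M1 := fun j : ℕ => main (e1 (j+1)) (e1 j) (hcont1 _) (hcont1 _) (hmap1 _) (hmap1 _)
    (hdist1 j)
  have M2 := fun j : ℕ => main (e2 (j+1)) (e2 j) (hcont2 _) (hcont2 _) (hmap2 _) (hmap2 _)
    (hdist2 j)
  -- the lift
  refine ⟨fun p => Complex.arg (F (0,0))
      + (∑ j ∈ Finset.range N, Complex.arg (F (e1 (j+1) p) / F (e1 j p)))
      + (∑ j ∈ Finset.range N, Complex.arg (F (e2 (j+1) p) / F (e2 j p))), ?_, ?_⟩
  · refine (continuousOn_const.add (continuousOn_finset_sum _ fun j _ => (M1 j).1)).add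
      (continuousOn_finset_sum _ fun j _ => (M2 j).1)
  · intro p hp
    have hs : p.1 ∈ Icc (0:ℝ) 1 := hp.1
    have ht : p.2 ∈ Icc (0:ℝ) 1 := hp.2
    have he10 : e1 0 p = ((0:ℝ), (0:ℝ)) := by
      simp only [he1]
      rw [Nat.cast_zero, zero_div, min_eq_right hs.1]
    have he1N : e1 N p = (p.1, 0) := by
      simp only [he1]
      rw [div_self (ne_of_gt hNpos), min_eq_left hs.2]
    have he20 : e2 0 p = (p.1, 0) := by
      simp only [he2]
      rw [Nat.cast_zero, zero_div, min_eq_right ht.1]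
    have he2N : e2 N p = p := by
      simp only [he2]
      rw [div_self (ne_of_gt hNpos), min_eq_left ht.2]
    -- the three base points
    have hz0Q : ((0:ℝ),(0:ℝ)) ∈ Q := ⟨⟨le_rfl, zero_le_one⟩, ⟨le_rfl, zero_le_one⟩⟩
    have hz1Q : ((p.1),(0:ℝ)) ∈ Q := ⟨hs, ⟨le_rfl, zero_le_one⟩⟩
    set z0 := F ((0:ℝ),(0:ℝ)) with hz0def
    set z1 := F ((p.1),(0:ℝ)) with hz1def
    set z2 := F p with hz2def
    have hz0 : z0 ≠ 0 := h0 _ hz0Q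
    have hz1 : z1 ≠ 0 := h0 _ hz1Q
    have hz2 : z2 ≠ 0 := h0 _ hp
    have ha0 : (‖z0‖ : ℂ) ≠ 0 := Complex.ofReal_ne_zero.2 (norm_ne_zero_iff.mpr hz0)
    have ha1 : (‖z1‖ : ℂ) ≠ 0 := Complex.ofReal_ne_zero.2 (norm_ne_zero_iff.mpr hz1)
    have ha2 : (‖z2‖ : ℂ) ≠ 0 := Complex.ofReal_ne_zero.2 (norm_ne_zero_iff.mpr hz2)
    -- unit functions
    set U1 : ℕ → ℂ := fun j => F (e1 j p) / (‖F (e1 j p)‖ : ℂ) with hU1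
    set U2 : ℕ → ℂ := fun j => F (e2 j p) / (‖F (e2 j p)‖ : ℂ) with hU2
    have hU1ne : ∀ j, j ≤ N → U1 j ≠ 0 := fun j _ =>
      div_ne_zero (h0 _ (hmap1 j hp)) (Complex.ofReal_ne_zero.2
        (norm_ne_zero_iff.mpr (h0 _ (hmap1 j hp))))
    have hU2ne : ∀ j, j ≤ N → U2 j ≠ 0 := fun j _ =>
      div_ne_zero (h0 _ (hmap2 j hp)) (Complex.ofReal_ne_zero.2
        (norm_ne_zero_iff.mpr (h0 _ (hmap2 j hp))))
    have hexp : Complex.exp ((((Complex.arg (F (0,0))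
        + (∑ j ∈ Finset.range N, Complex.arg (F (e1 (j+1) p) / F (e1 j p)))
        + (∑ j ∈ Finset.range N, Complex.arg (F (e2 (j+1) p) / F (e2 j p)))) : ℝ) : ℂ)
        * Complex.I) = z2 / (‖z2‖ : ℂ) := by
      rw [Complex.ofReal_add, Complex.ofReal_add, add_mul, add_mul, Complex.exp_add,
        Complex.exp_add, Complex.ofReal_sum, Complex.ofReal_sum, Finset.sum_mul,
        Finset.sum_mul, Complex.exp_sum, Complex.exp_sum]
      have hP1 : (∏ j ∈ Finset.range N,
          Complex.exp ((Complex.arg (F (e1 (j+1) p) / F (e1 j p)) : ℂ) * Complex.I))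
          = U1 N / U1 0 := by
        rw [Finset.prod_congr rfl fun j _ => (M1 j).2 p hp]
        exact wia_prod_telescope U1 N hU1ne
      have hP2 : (∏ j ∈ Finset.range N,
          Complex.exp ((Complex.arg (F (e2 (j+1) p) / F (e2 j p)) : ℂ) * Complex.I))
          = U2 N / U2 0 := by
        rw [Finset.prod_congr rfl fun j _ => (M2 j).2 p hp]
        exact wia_prod_telescope U2 N hU2ne
      rw [hP1, hP2]
      have hbase : Complex.exp ((Complex.arg (F (0,0)) : ℂ) * Complex.I)
          = z0 / (‖z0‖ : ℂ) := by
        have key := Complex.norm_mul_exp_arg_mul_I (F (0,0))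
        rw [eq_div_iff ha0, mul_comm]
        exact key
      rw [hbase]
      have e1Nv : U1 N = z1 / (‖z1‖ : ℂ) := by
        show F (e1 N p) / (‖F (e1 N p)‖ : ℂ) = _
        rw [he1N]
      have e10v : U1 0 = z0 / (‖z0‖ : ℂ) := by
        show F (e1 0 p) / (‖F (e1 0 p)‖ : ℂ) = _
        rw [he10]
      have e2Nv : U2 N = z2 / (‖z2‖ : ℂ) := by
        show F (e2 N p) / (‖F (e2 N p)‖ : ℂ) = _
        rw [he2N]
      have e20v : U2 0 = z1 / (‖z1‖ : ℂ) := by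
        show F (e2 0 p) / (‖F (e2 0 p)‖ : ℂ) = _
        rw [he20]
      rw [e1Nv, e10v, e2Nv, e20v]
      field_simp
    rw [hexp]
    field_simp

private lemma wia_H1 {a b : ℤ} (h : Real.pi/2 + Real.pi*(a:ℝ) < Real.pi*((b:ℝ)+1)) : a ≤ b := by
  by_contra hc
  push_neg at hc
  have h1 : ((b:ℝ)+1) ≤ (a:ℝ) := by exact_mod_cast hc
  nlinarith [Real.pi_pos, mul_le_mul_of_nonneg_left h1 (le_of_lt Real.pi_pos)]

private lemma wia_H2 {a b : ℤ} (h : Real.pi*(a:ℝ) < Real.pi/2 + Real.pi*((b:ℝ)+1)) :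
    a ≤ b + 1 := by
  by_contra hc
  push_neg at hc
  have h2 : b + 2 ≤ a := by omega
  have h1 : ((b:ℝ)+2) ≤ (a:ℝ) := by exact_mod_cast h2
  nlinarith [Real.pi_pos, mul_le_mul_of_nonneg_left h1 (le_of_lt Real.pi_pos)]

private lemma wia_sin_zero (j : ℤ) : Real.sin (0 + Real.pi * (j:ℝ)) = 0 := by
  rw [zero_add, mul_comm]; exact Real.sin_int_mul_pi j

private lemma wia_cos_zero (j : ℤ) : Real.cos (Real.pi/2 + Real.pi * (j:ℝ)) = 0 := by
  apply Real.cos_eq_zero_iff.mpr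
  exact ⟨j, by push_cast; ring⟩

private lemma wia_square (F : ℝ × ℝ → ℂ)
    (hF : ContinuousOn F (Icc (0:ℝ) 1 ×ˢ Icc (0:ℝ) 1))
    (h0 : ∀ p ∈ Icc (0:ℝ) 1 ×ˢ Icc (0:ℝ) 1, F p ≠ 0)
    (ht0 : ∀ s ∈ Icc (0:ℝ) 1, (F (s, 0)).im < 0)
    (ht1 : ∀ s ∈ Icc (0:ℝ) 1, 0 < (F (s, 1)).im)
    (hs0 : ∀ t ∈ Icc (0:ℝ) 1, 0 < (F (0, t)).re)
    (hs1 : ∀ t ∈ Icc (0:ℝ) 1, (F (1, t)).re < 0) : False := by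
  have hπ := Real.pi_pos
  obtain ⟨G, hGc, hGl⟩ := wia_exists_lift F hF h0
  have h01 : (0:ℝ) ∈ Icc (0:ℝ) 1 := ⟨le_rfl, zero_le_one⟩
  have h11 : (1:ℝ) ∈ Icc (0:ℝ) 1 := ⟨zero_le_one, le_rfl⟩
  have hmemQ : ∀ u v : ℝ, u ∈ Icc (0:ℝ) 1 → v ∈ Icc (0:ℝ) 1 →
      (u, v) ∈ Icc (0:ℝ) 1 ×ˢ Icc (0:ℝ) 1 := fun u v hu hv => ⟨hu, hv⟩
  have him : ∀ p ∈ Icc (0:ℝ) 1 ×ˢ Icc (0:ℝ) 1,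
      (F p).im = ‖F p‖ * Real.sin (G p) := by
    intro p hp
    conv_lhs => rw [hGl p hp, Complex.exp_mul_I]
    simp [Complex.mul_im, Complex.add_im, Complex.add_re, Complex.mul_re,
      Complex.sin_ofReal_re, Complex.sin_ofReal_im, Complex.cos_ofReal_re,
      Complex.cos_ofReal_im]
  have hre : ∀ p ∈ Icc (0:ℝ) 1 ×ˢ Icc (0:ℝ) 1,
      (F p).re = ‖F p‖ * Real.cos (G p) := by
    intro p hp
    conv_lhs => rw [hGl p hp, Complex.exp_mul_I]
    simp [Complex.mul_im, Complex.add_im, Complex.add_re, Complex.mul_re,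
      Complex.sin_ofReal_re, Complex.sin_ofReal_im, Complex.cos_ofReal_re,
      Complex.cos_ofReal_im]
  have habs : ∀ p ∈ Icc (0:ℝ) 1 ×ˢ Icc (0:ℝ) 1, 0 < ‖F p‖ :=
    fun p hp => norm_pos_iff.mpr (h0 p hp)
  -- side 1 : s ↦ G (s, 0), sin < 0
  have hsin1 : ∀ τ ∈ Icc (0:ℝ) 1, Real.sin (G (τ, 0)) < 0 := by
    intro τ hτ
    have h1 := ht0 τ hτ
    rw [him _ (hmemQ τ 0 hτ h01)] at h1
    nlinarith [habs _ (hmemQ τ 0 hτ h01)]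
  obtain ⟨m₁, hm₁⟩ := wia_branch (fun s => G (s, 0)) 0 1 0 zero_le_one
    (hGc.comp (continuous_id.prodMk continuous_const).continuousOn
      (fun u hu => hmemQ u 0 hu h01))
    (by
      intro τ hτ j hj
      have hj' : G (τ, 0) = 0 + Real.pi * (j:ℝ) := hj
      have h1 := hsin1 τ hτ
      rw [hj'] at h1
      linarith [wia_sin_zero j, h1])
  -- side 3 : s ↦ G (s, 1), sin > 0
  have hsin3 : ∀ τ ∈ Icc (0:ℝ) 1, 0 < Real.sin (G (τ, 1)) := by
    intro τ hτ
    have h1 := ht1 τ hτ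
    rw [him _ (hmemQ τ 1 hτ h11)] at h1
    nlinarith [habs _ (hmemQ τ 1 hτ h11)]
  obtain ⟨m₃, hm₃⟩ := wia_branch (fun s => G (s, 1)) 0 1 0 zero_le_one
    (hGc.comp (continuous_id.prodMk continuous_const).continuousOn
      (fun u hu => hmemQ u 1 hu h11))
    (by
      intro τ hτ j hj
      have hj' : G (τ, 1) = 0 + Real.pi * (j:ℝ) := hj
      have h1 := hsin3 τ hτ
      rw [hj'] at h1
      linarith [wia_sin_zero j, h1])
  -- side 4 : t ↦ G (0, t), cos > 0
  have hcos4 : ∀ τ ∈ Icc (0:ℝ) 1, 0 < Real.cos (G (0, τ)) := by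
    intro τ hτ
    have h1 := hs0 τ hτ
    rw [hre _ (hmemQ 0 τ h01 hτ)] at h1
    nlinarith [habs _ (hmemQ 0 τ h01 hτ)]
  obtain ⟨m₄, hm₄⟩ := wia_branch (fun t => G (0, t)) 0 1 (Real.pi/2) zero_le_one
    (hGc.comp (continuous_const.prodMk continuous_id).continuousOn
      (fun u hu => hmemQ 0 u h01 hu))
    (by
      intro τ hτ j hj
      have hj' : G (0, τ) = Real.pi/2 + Real.pi * (j:ℝ) := hj
      have h1 := hcos4 τ hτ
      rw [hj'] at h1
      linarith [wia_cos_zero j, h1])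
  -- side 2 : t ↦ G (1, t), cos < 0
  have hcos2 : ∀ τ ∈ Icc (0:ℝ) 1, Real.cos (G (1, τ)) < 0 := by
    intro τ hτ
    have h1 := hs1 τ hτ
    rw [hre _ (hmemQ 1 τ h11 hτ)] at h1
    nlinarith [habs _ (hmemQ 1 τ h11 hτ)]
  obtain ⟨m₂, hm₂⟩ := wia_branch (fun t => G (1, t)) 0 1 (Real.pi/2) zero_le_one
    (hGc.comp (continuous_const.prodMk continuous_id).continuousOn
      (fun u hu => hmemQ 1 u h11 hu))
    (by
      intro τ hτ j hj
      have hj' : G (1, τ) = Real.pi/2 + Real.pi * (j:ℝ) := hj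
      have h1 := hcos2 τ hτ
      rw [hj'] at h1
      linarith [wia_cos_zero j, h1])
  -- beta-reduced side facts
  have Hm1 : ∀ τ ∈ Icc (0:ℝ) 1,
      G (τ, 0) ∈ Ioo (Real.pi * (m₁:ℝ)) (Real.pi * ((m₁:ℝ)+1)) := by
    intro τ hτ
    have hx := hm₁ τ hτ
    simpa using hx
  have Hm3 : ∀ τ ∈ Icc (0:ℝ) 1,
      G (τ, 1) ∈ Ioo (Real.pi * (m₃:ℝ)) (Real.pi * ((m₃:ℝ)+1)) := by
    intro τ hτ
    have hx := hm₃ τ hτ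
    simpa using hx
  have Hm4 : ∀ τ ∈ Icc (0:ℝ) 1,
      G (0, τ) ∈ Ioo (Real.pi/2 + Real.pi * (m₄:ℝ)) (Real.pi/2 + Real.pi * ((m₄:ℝ)+1)) := by
    intro τ hτ
    exact hm₄ τ hτ
  have Hm2 : ∀ τ ∈ Icc (0:ℝ) 1,
      G (1, τ) ∈ Ioo (Real.pi/2 + Real.pi * (m₂:ℝ)) (Real.pi/2 + Real.pi * ((m₂:ℝ)+1)) := by
    intro τ hτ
    exact hm₂ τ hτ
  -- parities
  have hodd1 : Odd m₁ := wia_odd_of_sin_neg (Hm1 0 h01) (hsin1 0 h01)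
  have heven3 : Even m₃ := wia_even_of_sin_pos (Hm3 0 h01) (hsin3 0 h01)
  have hodd4 : Odd m₄ := wia_odd_of_cos_pos (Hm4 0 h01) (hcos4 0 h01)
  have heven2 : Even m₂ := wia_even_of_cos_neg (Hm2 0 h01) (hcos2 0 h01)
  -- corner (1,0) : side1 at 1, side2 at 0
  have hc10a := Hm1 1 h11
  have hc10b := Hm2 0 h01
  have e10 : m₂ ≤ m₁ := wia_H1 (by linarith [hc10b.1, hc10a.2])
  have e11 : m₁ ≤ m₂ + 1 := wia_H2 (by linarith [hc10a.1, hc10b.2])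
  -- corner (1,1) : side2 at 1, side3 at 1
  have hc11a := Hm2 1 h11
  have hc11b := Hm3 1 h11
  have e20 : m₂ ≤ m₃ := wia_H1 (by linarith [hc11a.1, hc11b.2])
  have e21 : m₃ ≤ m₂ + 1 := wia_H2 (by linarith [hc11b.1, hc11a.2])
  -- corner (0,1) : side3 at 0, side4 at 1
  have hc01a := Hm3 0 h01
  have hc01b := Hm4 1 h11
  have e30 : m₄ ≤ m₃ := wia_H1 (by linarith [hc01b.1, hc01a.2])
  have e31 : m₃ ≤ m₄ + 1 := wia_H2 (by linarith [hc01a.1, hc01b.2])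
  -- corner (0,0) : side1 at 0, side4 at 0
  have hc00a := Hm1 0 h01
  have hc00b := Hm4 0 h01
  have e40 : m₄ ≤ m₁ := wia_H1 (by linarith [hc00b.1, hc00a.2])
  have e41 : m₁ ≤ m₄ + 1 := wia_H2 (by linarith [hc00a.1, hc00b.2])
  obtain ⟨a1, ha1⟩ := hodd1
  obtain ⟨a2, ha2⟩ := heven2
  obtain ⟨a3, ha3⟩ := heven3
  obtain ⟨a4, ha4⟩ := hodd4
  omega

private lemma wia_key (x : ℂ) (r : ℝ) (R : EReal)
    (γ₀ : ℝ → ℂ) (h₀cont : ContinuousOn γ₀ (Ico 0 1))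
    (h₀inner : dist (γ₀ 0) x = r)
    (h₀outer : Tendsto (fun t => ((dist (γ₀ t) x : ℝ) : EReal))
      (nhdsWithin 1 (Iio 1)) (nhds R))
    (θ₀ : ℝ → ℝ) (hθ₀cont : ContinuousOn θ₀ (Ico 0 1))
    (hθ₀ : ∀ t ∈ Ico (0:ℝ) 1, γ₀ t - x =
      (‖γ₀ t - x‖ : ℂ) * Complex.exp ((θ₀ t : ℂ) * Complex.I))
    (γ : ℝ → ℂ) (hcont : ContinuousOn γ (Icc 0 1))
    (hann : ∀ t ∈ Icc (0:ℝ) 1, r < dist (γ t) x ∧ ((dist (γ t) x : ℝ) : EReal) < R)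
    (hsep : ∀ t ∈ Icc (0:ℝ) 1, ∀ s ∈ Ico (0:ℝ) 1, γ t ≠ γ₀ s)
    (θ : ℝ → ℝ) (hθcont : ContinuousOn θ (Icc 0 1))
    (hθ : ∀ t ∈ Icc (0:ℝ) 1, γ t - x =
      (‖γ t - x‖ : ℂ) * Complex.exp ((θ t : ℂ) * Complex.I))
    (B : ℝ)
    (hB : ∀ s₁ s₂, s₁ ∈ Ico (0:ℝ) 1 → s₂ ∈ Ico (0:ℝ) 1 → s₁ ≤ s₂ →
      |θ₀ s₂ - θ₀ s₁| ≤ B) :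
    θ 1 - θ 0 ≤ B + 4 * Real.pi := by
  have hπ := Real.pi_pos
  by_contra hcon
  push_neg at hcon
  have h01 : (0:ℝ) ∈ Icc (0:ℝ) 1 := ⟨le_rfl, zero_le_one⟩
  have h11 : (1:ℝ) ∈ Icc (0:ℝ) 1 := ⟨zero_le_one, le_rfl⟩
  -- radius function of γ
  have hρc : ContinuousOn (fun t => dist (γ t) x) (Icc (0:ℝ) 1) :=
    (Continuous.dist continuous_id continuous_const).comp_continuousOn hcont
  have hρ₀c : ContinuousOn (fun s => dist (γ₀ s) x) (Ico (0:ℝ) 1) :=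
    (Continuous.dist continuous_id continuous_const).comp_continuousOn h₀cont
  obtain ⟨tmin, htminQ, htmin⟩ := isCompact_Icc.exists_isMinOn ⟨0, h01⟩ hρc
  obtain ⟨tmax, htmaxQ, htmax⟩ := isCompact_Icc.exists_isMaxOn ⟨0, h01⟩ hρc
  set a : ℝ := (r + dist (γ tmin) x) / 2 with ha_def
  have hrmin : r < dist (γ tmin) x := (hann tmin htminQ).1
  have hra : r < a := by rw [ha_def]; linarith
  have haρ : ∀ t ∈ Icc (0:ℝ) 1, a < dist (γ t) x := by
    intro t ht
    have h' : dist (γ tmin) x ≤ dist (γ t) x := isMinOn_iff.1 htmin t ht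
    rw [ha_def]; linarith
  -- choose b
  have hmaxR : ((dist (γ tmax) x : ℝ) : EReal) < R := (hann tmax htmaxQ).2
  obtain ⟨c, hc1, hc2⟩ := exists_between hmaxR
  have hcne_top : c ≠ ⊤ := ne_top_of_lt hc2
  have hcne_bot : c ≠ ⊥ := by
    intro h
    rw [h] at hc1
    exact (not_lt_bot hc1)
  set b : ℝ := c.toReal with hb_def
  have hbc : (b : EReal) = c := EReal.coe_toReal hcne_top hcne_bot
  have hbR : (b : EReal) < R := by rw [hbc]; exact hc2
  have hρb : ∀ t ∈ Icc (0:ℝ) 1, dist (γ t) x < b := by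
    intro t ht
    have h1 : ((dist (γ tmax) x : ℝ) : EReal) < (b : EReal) := by rw [hbc]; exact hc1
    have h2 : dist (γ tmax) x < b := EReal.coe_lt_coe_iff.1 h1
    have h' : dist (γ t) x ≤ dist (γ tmax) x := isMaxOn_iff.1 htmax t ht
    linarith
  have hab : a < b := lt_trans (haρ tmin htminQ) (hρb tmin htminQ)
  -- find a parameter u where γ₀ has radius > b
  have hev1 : ∀ᶠ t in nhdsWithin (1:ℝ) (Iio 1),
      (b : EReal) < ((dist (γ₀ t) x : ℝ) : EReal) := h₀outer.eventually_const_lt hbR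
  have hev2 : Ioo (0:ℝ) 1 ∈ nhdsWithin (1:ℝ) (Iio 1) :=
    Ioo_mem_nhdsLT_of_mem ⟨zero_lt_one, le_rfl⟩
  obtain ⟨u, hub, huIoo⟩ := (hev1.and (eventually_of_mem hev2 (fun y hy => hy))).exists
  have hub' : b < dist (γ₀ u) x := EReal.coe_lt_coe_iff.1 hub
  have hsubu : Icc (0:ℝ) u ⊆ Ico 0 1 := fun v hv => ⟨hv.1, lt_of_le_of_lt hv.2 huIoo.2⟩
  have hρ₀u : ContinuousOn (fun s => dist (γ₀ s) x) (Icc (0:ℝ) u) := hρ₀c.mono hsubu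
  -- s₁ with radius a
  obtain ⟨s₁, hs₁mem, hs₁⟩ := intermediate_value_Icc (le_of_lt huIoo.1) hρ₀u
    (by
      show a ∈ Icc (dist (γ₀ 0) x) (dist (γ₀ u) x)
      rw [h₀inner]
      exact ⟨le_of_lt hra, le_of_lt (lt_trans hab hub')⟩)
  have hs₁' : dist (γ₀ s₁) x = a := hs₁
  -- s₂ with radius b
  obtain ⟨s₂, hs₂mem, hs₂⟩ := intermediate_value_Icc (le_of_lt huIoo.1) hρ₀u
    (by
      show b ∈ Icc (dist (γ₀ 0) x) (dist (γ₀ u) x)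
      rw [h₀inner]
      exact ⟨le_of_lt (lt_trans hra hab), le_of_lt hub'⟩)
  have hs₂' : dist (γ₀ s₂) x = b := hs₂
  -- the infimum of θ₀
  have hbdd : BddBelow (θ₀ '' Ico 0 1) := by
    refine ⟨θ₀ 0 - B, ?_⟩
    rintro y ⟨s, hs, rfl⟩
    have := hB 0 s ⟨le_rfl, zero_lt_one⟩ hs hs.1
    have := abs_le.1 this
    linarith [this.1]
  set m : ℝ := sInf (θ₀ '' Ico 0 1) with hm_def
  have hmle : ∀ s ∈ Ico (0:ℝ) 1, m ≤ θ₀ s := fun s hs => csInf_le hbdd ⟨s, hs, rfl⟩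
  have hmB : ∀ s ∈ Ico (0:ℝ) 1, θ₀ s ≤ m + B := by
    intro s hs
    have hlow : θ₀ s - B ≤ m := by
      rw [hm_def]
      apply le_csInf (⟨θ₀ 0, ⟨0, ⟨le_rfl, zero_lt_one⟩, rfl⟩⟩ : (θ₀ '' Ico 0 1).Nonempty)
      rintro y ⟨s', hs', rfl⟩
      rcases le_total s s' with h | h
      · have := abs_le.1 (hB s s' hs hs' h)
        linarith [this.2]
      · have := abs_le.1 (hB s' s hs' hs h)
        linarith [this.1]
    linarith
  -- choice of k
  set K : ℤ := ⌈(θ 0 - m) / (2 * Real.pi)⌉ + 1 with hK_def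
  have hceil1 : (θ 0 - m) / (2 * Real.pi) ≤ (⌈(θ 0 - m) / (2 * Real.pi)⌉ : ℝ) := Int.le_ceil _
  have hceil2 : (⌈(θ 0 - m) / (2 * Real.pi)⌉ : ℝ) < (θ 0 - m) / (2 * Real.pi) + 1 :=
    Int.ceil_lt_add_one _
  have hKr : (K : ℝ) = (⌈(θ 0 - m) / (2 * Real.pi)⌉ : ℝ) + 1 := by rw [hK_def]; push_cast; ring
  have hk1 : θ 0 < m + 2 * Real.pi * (K : ℝ) := by
    rw [hKr]
    have := (div_le_iff₀ (by positivity : (0:ℝ) < 2 * Real.pi)).1 hceil1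
    linarith
  have hk2 : m + B + 2 * Real.pi * (K : ℝ) < θ 1 := by
    rw [hKr]
    have h2 : (⌈(θ 0 - m) / (2 * Real.pi)⌉ : ℝ) * (2 * Real.pi) < θ 0 - m + 2 * Real.pi := by
      have hpos : (0:ℝ) < 2 * Real.pi := by positivity
      have h3 := mul_lt_mul_of_pos_right hceil2 hpos
      rw [add_mul, div_mul_cancel₀ _ (ne_of_gt hpos)] at h3
      linarith
    linarith [hcon]
  -- the connecting segment parametrization
  set σ : ℝ → ℝ := fun s => s₁ + (s₂ - s₁) * s with hσ_def
  have hσmem : ∀ s ∈ Icc (0:ℝ) 1, σ s ∈ Ico (0:ℝ) 1 := by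
    intro s hs
    have h1 : 0 ≤ s₁ := hs₁mem.1
    have h2 : 0 ≤ s₂ := hs₂mem.1
    have h3 : s₁ ≤ u := hs₁mem.2
    have h4 : s₂ ≤ u := hs₂mem.2
    constructor
    · rw [hσ_def]
      dsimp
      nlinarith [mul_nonneg h1 (sub_nonneg.2 hs.2), mul_nonneg h2 hs.1]
    · have : σ s ≤ u := by
        rw [hσ_def]
        dsimp
        nlinarith [mul_le_mul_of_nonneg_right h3 (sub_nonneg.2 hs.2),
          mul_le_mul_of_nonneg_right h4 hs.1]
      exact lt_of_le_of_lt this huIoo.2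
  -- the separation map
  set F : ℝ × ℝ → ℂ := fun p =>
    ((dist (γ p.2) x - dist (γ₀ (σ p.1)) x : ℝ) : ℂ) +
      ((θ p.2 - θ₀ (σ p.1) - 2 * Real.pi * (K : ℝ) : ℝ) : ℂ) * Complex.I with hF_def
  have hFre : ∀ p : ℝ × ℝ, (F p).re = dist (γ p.2) x - dist (γ₀ (σ p.1)) x := by
    intro p; rw [hF_def]; simp
  have hFim : ∀ p : ℝ × ℝ, (F p).im = θ p.2 - θ₀ (σ p.1) - 2 * Real.pi * (K : ℝ) := by
    intro p; rw [hF_def]; simp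
  have hσcont : Continuous (fun p : ℝ × ℝ => σ p.1) := by
    rw [hσ_def]
    exact continuous_const.add (continuous_const.mul continuous_fst)
  have hσmaps : MapsTo (fun p : ℝ × ℝ => σ p.1) (Icc (0:ℝ) 1 ×ˢ Icc (0:ℝ) 1) (Ico (0:ℝ) 1) :=
    fun p hp => hσmem p.1 hp.1
  have hsnd : MapsTo (fun p : ℝ × ℝ => p.2) (Icc (0:ℝ) 1 ×ˢ Icc (0:ℝ) 1) (Icc (0:ℝ) 1) :=
    fun p hp => hp.2
  have hFc : ContinuousOn F (Icc (0:ℝ) 1 ×ˢ Icc (0:ℝ) 1) := by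
    rw [hF_def]
    apply ContinuousOn.add
    · apply Complex.continuous_ofReal.comp_continuousOn
      exact ((Continuous.dist continuous_id continuous_const).comp_continuousOn
          (hcont.comp continuous_snd.continuousOn hsnd)).sub
        ((Continuous.dist continuous_id continuous_const).comp_continuousOn
          (h₀cont.comp hσcont.continuousOn hσmaps))
    · apply ContinuousOn.mul _ continuousOn_const
      apply Complex.continuous_ofReal.comp_continuousOn
      exact ((hθcont.comp continuous_snd.continuousOn hsnd).sub
        (hθ₀cont.comp hσcont.continuousOn hσmaps)).sub continuousOn_const
  have hF0 : ∀ p ∈ Icc (0:ℝ) 1 ×ˢ Icc (0:ℝ) 1, F p ≠ 0 := by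
    intro p hp hzero
    have hre0 : dist (γ p.2) x = dist (γ₀ (σ p.1)) x := by
      have := hFre p; rw [hzero] at this; simp at this; linarith
    have him0 : θ p.2 = θ₀ (σ p.1) + 2 * Real.pi * (K : ℝ) := by
      have := hFim p; rw [hzero] at this; simp at this; linarith
    have hγeq : γ p.2 = γ₀ (σ p.1) := by
      have e1 := hθ p.2 hp.2
      have e2 := hθ₀ (σ p.1) (hσmem p.1 hp.1)
      have habs : ‖γ p.2 - x‖ = ‖γ₀ (σ p.1) - x‖ := by
        rw [← Complex.dist_eq, ← Complex.dist_eq]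
        exact hre0
      have hexp : Complex.exp ((θ p.2 : ℂ) * Complex.I)
          = Complex.exp ((θ₀ (σ p.1) : ℂ) * Complex.I) := by
        rw [him0]
        push_cast
        rw [add_mul, Complex.exp_add]
        have : (2 * (Real.pi : ℂ) * (K : ℂ)) * Complex.I
            = (K : ℂ) * (2 * (Real.pi : ℂ) * Complex.I) := by ring
        rw [this, Complex.exp_int_mul_two_pi_mul_I]
        ring
      have : γ p.2 - x = γ₀ (σ p.1) - x := by
        rw [e1, e2, habs, hexp]
      exact sub_left_injective this
    exact hsep p.2 hp.2 (σ p.1) (hσmem p.1 hp.1) hγeq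
  -- side conditions
  have hσ0 : σ 0 = s₁ := by rw [hσ_def]; ring
  have hσ1 : σ 1 = s₂ := by rw [hσ_def]; ring
  refine wia_square F hFc hF0 ?_ ?_ ?_ ?_
  · intro s hs
    rw [hFim]
    dsimp
    have := hmle (σ s) (hσmem s hs)
    linarith [hk1]
  · intro s hs
    rw [hFim]
    dsimp
    have := hmB (σ s) (hσmem s hs)
    linarith [hk2]
  · intro t ht
    rw [hFre]
    dsimp
    rw [hσ0, hs₁']
    linarith [haρ t ht]
  · intro t ht
    rw [hFre]
    dsimp
    rw [hσ1, hs₂']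
    linarith [hρb t ht]


/-- Let `A = {z : r < |z - x| < R}` be an annulus
(`0 < r < R ≤ ∞`; for `R = ∞` the annulus is the complement of the closed
ball), let `γ₀` be a simple continuous curve in `A` connecting the inner and
outer boundaries of `A`, and let `γ` be a simple continuous curve contained in
`A \ γ₀`.  If `B` bounds the topological winding `|W(γ₀[s₁,s₂], x)|` of every
subarc of `γ₀`, then the topological winding of `γ` around `x` satisfies
`|W(γ, x)| ≤ B + 4π`.  Windings are expressed through continuous lifts
`θ₀, θ` of the argument of `· - x` along the curves. -/
theorem winding_in_annulus (x : ℂ) (r : ℝ) (R : EReal)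
    (hr : 0 < r) (hrR : (r : EReal) < R)
    (A : Set ℂ)
    (hA : A = {z : ℂ | (r : EReal) < ((dist z x : ℝ) : EReal) ∧
      ((dist z x : ℝ) : EReal) < R})
    -- the simple curve γ₀ connecting the inner and outer boundaries
    (γ₀ : ℝ → ℂ)
    (h₀cont : ContinuousOn γ₀ (Ico 0 1))
    (h₀inj : InjOn γ₀ (Ico 0 1))
    (h₀mem : ∀ t ∈ Ioo (0:ℝ) 1, γ₀ t ∈ A)
    (h₀inner : dist (γ₀ 0) x = r)
    (h₀outer : Tendsto (fun t => ((dist (γ₀ t) x : ℝ) : EReal))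
      (nhdsWithin 1 (Iio 1)) (nhds R))
    -- a continuous argument lift along γ₀
    (θ₀ : ℝ → ℝ) (hθ₀cont : ContinuousOn θ₀ (Ico 0 1))
    (hθ₀ : ∀ t ∈ Ico (0:ℝ) 1, γ₀ t - x =
      (‖γ₀ t - x‖ : ℂ) * Complex.exp ((θ₀ t : ℂ) * Complex.I))
    -- the simple curve γ in A \ γ₀
    (γ : ℝ → ℂ)
    (hcont : ContinuousOn γ (Icc 0 1))
    (hinj : InjOn γ (Icc 0 1))
    (hmem : ∀ t ∈ Icc (0:ℝ) 1, γ t ∈ A \ (γ₀ '' Ico 0 1))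
    -- a continuous argument lift along γ
    (θ : ℝ → ℝ) (hθcont : ContinuousOn θ (Icc 0 1))
    (hθ : ∀ t ∈ Icc (0:ℝ) 1, γ t - x =
      (‖γ t - x‖ : ℂ) * Complex.exp ((θ t : ℂ) * Complex.I))
    -- B bounds the winding of every subarc of γ₀
    (B : ℝ)
    (hB : ∀ s₁ s₂, s₁ ∈ Ico (0:ℝ) 1 → s₂ ∈ Ico (0:ℝ) 1 → s₁ ≤ s₂ →
      |θ₀ s₂ - θ₀ s₁| ≤ B) :
    |θ 1 - θ 0| ≤ B + 4 * Real.pi := by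
  have hann : ∀ t ∈ Icc (0:ℝ) 1, r < dist (γ t) x ∧ ((dist (γ t) x : ℝ) : EReal) < R := by
    intro t ht
    have h1 := (hmem t ht).1
    rw [hA] at h1
    exact ⟨EReal.coe_lt_coe_iff.1 h1.1, h1.2⟩
  have hsep : ∀ t ∈ Icc (0:ℝ) 1, ∀ s ∈ Ico (0:ℝ) 1, γ t ≠ γ₀ s := by
    intro t ht s hs heq
    exact (hmem t ht).2 ⟨s, hs, heq.symm⟩
  have key1 := wia_key x r R γ₀ h₀cont h₀inner h₀outer θ₀ hθ₀cont hθ₀ γ hcont hann hsep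
    θ hθcont hθ B hB
  have hmaps : MapsTo (fun t : ℝ => 1 - t) (Icc (0:ℝ) 1) (Icc (0:ℝ) 1) := by
    intro t ht
    constructor
    · show (0:ℝ) ≤ 1 - t
      linarith [ht.2]
    · show (1:ℝ) - t ≤ 1
      linarith [ht.1]
  have key2 := wia_key x r R γ₀ h₀cont h₀inner h₀outer θ₀ hθ₀cont hθ₀
    (fun t => γ (1 - t))
    (hcont.comp (continuous_const.sub continuous_id).continuousOn hmaps)
    (fun t ht => hann (1 - t) (hmaps ht))
    (fun t ht s hs => hsep (1 - t) (hmaps ht) s hs)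
    (fun t => θ (1 - t))
    (hθcont.comp (continuous_const.sub continuous_id).continuousOn hmaps)
    (fun t ht => hθ (1 - t) (hmaps ht)) B hB
  have key2' : θ 0 - θ 1 ≤ B + 4 * Real.pi := by
    have h : (1:ℝ) - 1 = 0 := by norm_num
    have h' : (1:ℝ) - 0 = 1 := by norm_num
    simpa [h, h'] using key2
  exact abs_le.mpr ⟨by linarith [key2'], key1⟩
end

section
/- Let D ⊂ ℂ be a domain, γ ⊂ D̄ a simple piecewise-smooth curve with smooth endpoints, and ψ a conformal (injective holomorphic) map on D. Then the change in intrinsic winding under ψ is W_i(ψ(γ)) - W_i(γ) = arg(ψ'(γ(1))) - arg(ψ'(γ(0))), where arg is any continuous branch of the argument on ψ'(D). -/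
open Complex Set Metric Filter

/-- Let `D ⊂ ℂ` be a domain, `γ` a simple piecewise-smooth
curve in `D̄` (with smooth endpoints; here parametrised in `D` with continuous
nonvanishing derivative `g`), and `ψ` a conformal (injective holomorphic) map
on `D` with nonvanishing derivative.  Given continuous argument lifts `θ` of
the tangent `g` of `γ`, `Θ` of the tangent `deriv ψ (γ t) · g t` of `ψ ∘ γ`,
and a continuous branch `a` of the argument on `ψ'(D)`, the change of
intrinsic winding is
`Wᵢ(ψ(γ)) - Wᵢ(γ) = a(ψ'(γ(1))) - a(ψ'(γ(0)))`. -/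
theorem winding_change_conformal
    (D : Set ℂ) (hD : IsOpen D) (hDconn : IsConnected D)
    (ψ : ℂ → ℂ) (hψ : DifferentiableOn ℂ ψ D) (hψinj : InjOn ψ D)
    (hψ' : ∀ z ∈ D, deriv ψ z ≠ 0)
    (γ g : ℝ → ℂ)
    (hmem : ∀ t ∈ Icc (0:ℝ) 1, γ t ∈ D)
    (hderiv : ∀ t ∈ Icc (0:ℝ) 1, HasDerivAt γ (g t) t)
    (hg : ContinuousOn g (Icc 0 1))
    (hgne : ∀ t ∈ Icc (0:ℝ) 1, g t ≠ 0)
    (hinj : InjOn γ (Icc 0 1))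
    -- continuous argument lift along the tangent of γ
    (θ : ℝ → ℝ) (hθc : ContinuousOn θ (Icc 0 1))
    (hθ : ∀ t ∈ Icc (0:ℝ) 1, g t =
      (‖g t‖ : ℂ) * Complex.exp ((θ t : ℂ) * Complex.I))
    -- continuous argument lift along the tangent of ψ ∘ γ
    (Θ : ℝ → ℝ) (hΘc : ContinuousOn Θ (Icc 0 1))
    (hΘ : ∀ t ∈ Icc (0:ℝ) 1, deriv ψ (γ t) * g t =
      (‖deriv ψ (γ t) * g t‖ : ℂ) * Complex.exp ((Θ t : ℂ) * Complex.I))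
    -- a continuous branch of the argument on ψ'(D)
    (a : ℂ → ℝ) (ha_cont : ContinuousOn a ((deriv ψ) '' D))
    (ha : ∀ w ∈ (deriv ψ) '' D, w =
      (‖w‖ : ℂ) * Complex.exp ((a w : ℂ) * Complex.I)) :
    (Θ 1 - Θ 0) - (θ 1 - θ 0) = a (deriv ψ (γ 1)) - a (deriv ψ (γ 0)) := by

  -- `deriv ψ` is continuous on `D`
  have hψ'cont : ContinuousOn (deriv ψ) D :=
    ((hψ.analyticOnNhd hD).deriv).continuousOn
  -- `γ` is continuous on `Icc 0 1`
  have hγc : ContinuousOn γ (Icc 0 1) := fun t ht =>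
    (hderiv t ht).continuousAt.continuousWithinAt
  set f : ℝ → ℝ := fun t => Θ t - θ t - a (deriv ψ (γ t)) with hf
  have hmaps : ∀ t ∈ Icc (0:ℝ) 1, deriv ψ (γ t) ∈ (deriv ψ) '' D :=
    fun t ht => ⟨γ t, hmem t ht, rfl⟩
  have hfc : ContinuousOn f (Icc 0 1) := by
    apply (hΘc.sub hθc).sub
    exact ha_cont.comp (hψ'cont.comp hγc (fun t ht => hmem t ht)) hmaps
  have hkey : ∀ t ∈ Icc (0:ℝ) 1, ∃ n : ℤ, f t = n * (2 * Real.pi) := by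
    intro t ht
    set w := deriv ψ (γ t) with hw
    have hwne : w ≠ 0 := hψ' _ (hmem t ht)
    have hgne' : g t ≠ 0 := hgne t ht
    have hA : (‖w * g t‖ : ℂ) ≠ 0 := by
      simp [map_mul, hwne, hgne']
    have hexp : Complex.exp ((Θ t : ℂ) * Complex.I) =
        Complex.exp (((θ t : ℂ) + (a w : ℂ)) * Complex.I) := by
      have h1 : (‖w * g t‖ : ℂ) * Complex.exp ((Θ t : ℂ) * Complex.I)
          = w * g t := (hΘ t ht).symm
      have h2 : w * g t = (‖w * g t‖ : ℂ) *
          Complex.exp (((θ t : ℂ) + (a w : ℂ)) * Complex.I) := by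
        calc w * g t = ((‖w‖ : ℂ) * Complex.exp ((a w : ℂ) * Complex.I)) *
              ((‖g t‖ : ℂ) * Complex.exp ((θ t : ℂ) * Complex.I)) := by
              rw [← ha w (hmaps t ht), ← hθ t ht]
          _ = (‖w * g t‖ : ℂ) *
              Complex.exp (((θ t : ℂ) + (a w : ℂ)) * Complex.I) := by
              rw [norm_mul, Complex.ofReal_mul, add_mul, Complex.exp_add]; ring
      exact mul_left_cancel₀ hA (h1.trans h2)
    rw [Complex.exp_eq_exp_iff_exists_int] at hexp
    obtain ⟨n, hn⟩ := hexp
    refine ⟨n, ?_⟩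
    have hC : ((Θ t : ℂ) - θ t - a w) * Complex.I
        = ((n : ℂ) * (2 * Real.pi)) * Complex.I := by linear_combination hn
    have hC' := mul_right_cancel₀ Complex.I_ne_zero hC
    have : ((Θ t - θ t - a w : ℝ) : ℂ) = (((n : ℝ) * (2 * Real.pi) : ℝ) : ℂ) := by
      push_cast; linear_combination hC'
    exact_mod_cast this
  have h0 : (0:ℝ) ∈ Icc (0:ℝ) 1 := by constructor <;> norm_num
  have h1 : (1:ℝ) ∈ Icc (0:ℝ) 1 := by constructor <;> norm_num
  obtain ⟨n0, hn0⟩ := hkey 0 h0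
  obtain ⟨n1, hn1⟩ := hkey 1 h1
  have hpi : (0:ℝ) < Real.pi := Real.pi_pos
  have hf10 : f 1 = f 0 := by
    by_contra hne
    rcases lt_or_gt_of_ne hne with hlt | hgt
    · -- f 1 < f 0 : use c = f 1 + π
      have hdiff : f 0 - f 1 ≥ 2 * Real.pi := by
        have : (n1 : ℝ) < n0 := by
          by_contra hc
          push_neg at hc
          have : f 0 ≤ f 1 := by rw [hn0, hn1]; nlinarith
          linarith
        have : (n1 : ℤ) + 1 ≤ n0 := by exact_mod_cast Int.lt_iff_add_one_le.mp (by exact_mod_cast this)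
        have : (n1 : ℝ) + 1 ≤ n0 := by exact_mod_cast this
        rw [hn0, hn1]; nlinarith
      have hc : f 1 + Real.pi ∈ Icc (f 1) (f 0) := by
        constructor <;> [linarith; linarith]
      have := intermediate_value_Icc' (by norm_num : (0:ℝ) ≤ 1) hfc hc
      obtain ⟨t, ht, hft⟩ := this
      obtain ⟨m, hm⟩ := hkey t ht
      rw [hm, hn1] at hft
      have h' : (2 * (m:ℝ)) * Real.pi = (2 * (n1:ℝ) + 1) * Real.pi := by linarith
      have : (2 * m : ℝ) = 2 * n1 + 1 := by
        have := mul_right_cancel₀ (ne_of_gt hpi) h'; push_cast; linarith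
      have : (2 * m : ℤ) = 2 * n1 + 1 := by exact_mod_cast this
      omega
    · -- f 0 < f 1 : use c = f 0 + π
      have hdiff : f 1 - f 0 ≥ 2 * Real.pi := by
        have : (n0 : ℝ) < n1 := by
          by_contra hc
          push_neg at hc
          have : f 1 ≤ f 0 := by rw [hn0, hn1]; nlinarith
          linarith
        have : (n0 : ℤ) + 1 ≤ n1 := by exact_mod_cast Int.lt_iff_add_one_le.mp (by exact_mod_cast this)
        have : (n0 : ℝ) + 1 ≤ n1 := by exact_mod_cast this
        rw [hn0, hn1]; nlinarith
      have hc : f 0 + Real.pi ∈ Icc (f 0) (f 1) := by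
        constructor <;> [linarith; linarith]
      have := intermediate_value_Icc (by norm_num : (0:ℝ) ≤ 1) hfc hc
      obtain ⟨t, ht, hft⟩ := this
      obtain ⟨m, hm⟩ := hkey t ht
      rw [hm, hn0] at hft
      have h' : (2 * (m:ℝ)) * Real.pi = (2 * (n0:ℝ) + 1) * Real.pi := by linarith
      have : (2 * m : ℝ) = 2 * n0 + 1 := by
        have := mul_right_cancel₀ (ne_of_gt hpi) h'; push_cast; linarith
      have : (2 * m : ℤ) = 2 * n0 + 1 := by exact_mod_cast this
      omega
  have hf1 : f 1 = Θ 1 - θ 1 - a (deriv ψ (γ 1)) := rfl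
  have hf0 : f 0 = Θ 0 - θ 0 - a (deriv ψ (γ 0)) := rfl
  rw [hf1, hf0] at hf10
  linarith
end
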